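/- If G = (X,Y;E) is an (a,b)-biregular bipartite graph, then G has an X-interval edge coloring using at most a·b colors; in particular χ'_int(G,X) ≤ a·b. -/
import Mathlib
open Finset

/-- `X` is one part of a bipartition of `G`: every edge joins `X` and its complement. -/
def IsBipartition {V : Type*} (G : SimpleGraph V) (X : Set V) : Prop :=
  ∀ v w, G.Adj v w → (v ∈ X ↔ w ∉ X)

/-- A proper edge coloring: distinct edges sharing a vertex get distinct colors. -/
def IsProperEdgeColoring {V : Type*} (G : SimpleGraph V) (c : G.edgeSet → ℕ) : Prop :=
  ∀ e f : G.edgeSet, e ≠ f → (∃ v, v ∈ (e : Sym2 V) ∧ v ∈ (f : Sym2 V)) → c e ≠ c f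

/-- The palette of a vertex: the set of colors on its incident edges. -/
def palette {V : Type*} (G : SimpleGraph V) (c : G.edgeSet → ℕ) (v : V) : Set ℕ :=
  {n | ∃ e : G.edgeSet, v ∈ (e : Sym2 V) ∧ c e = n}

/-- The coloring is interval at `v`: the palette of `v` is a set of consecutive integers. -/
def IntervalAt {V : Type*} (G : SimpleGraph V) (c : G.edgeSet → ℕ) (v : V) : Prop :=
  ∀ a b m : ℕ, a ∈ palette G c v → b ∈ palette G c v → a ≤ m → m ≤ b →
    m ∈ palette G c v

/-- A system of distinct representatives avoiding small forbidden sets. -/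
lemma sdr_aux {α : Type*} [DecidableEq α] :
    ∀ (n : ℕ) (T : Finset α) (C : Finset ℕ) (F : α → Finset ℕ),
      T.card = n → C.card = n → (∑ t ∈ T, (F t ∩ C).card) ≤ n - 1 →
      ∃ f : α → ℕ, Set.InjOn f ↑T ∧ ∀ t ∈ T, f t ∈ C ∧ f t ∉ F t := by
  intro n
  induction n with
  | zero =>
    intro T C F hT _ _
    have hTe : T = ∅ := Finset.card_eq_zero.mp hT
    subst hTe
    exact ⟨fun _ => 0, by simp [Set.InjOn], by simp⟩
  | succ n ih =>
    intro T C F hT hC hsum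
    have hTne : T.Nonempty := Finset.card_pos.mp (by omega)
    obtain ⟨t₀, ht₀, hmax⟩ := T.exists_max_image (fun t => (F t ∩ C).card) hTne
    have h1 : (F t₀ ∩ C).card ≤ ∑ t ∈ T, (F t ∩ C).card :=
      Finset.single_le_sum (f := fun t => (F t ∩ C).card) (fun _ _ => Nat.zero_le _) ht₀
    have hC0 : (C \ F t₀).Nonempty := by
      rw [← Finset.card_pos]
      have h2 := Finset.card_sdiff_add_card_inter C (F t₀)
      have h3 : (C ∩ F t₀).card = (F t₀ ∩ C).card := by rw [Finset.inter_comm]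
      omega
    obtain ⟨c₀, hc₀⟩ := hC0
    have hc₀C : c₀ ∈ C := (Finset.mem_sdiff.mp hc₀).1
    have hc₀F : c₀ ∉ F t₀ := (Finset.mem_sdiff.mp hc₀).2
    have hsum' : ∑ t ∈ T.erase t₀, (F t ∩ C).card + (F t₀ ∩ C).card
        = ∑ t ∈ T, (F t ∩ C).card := Finset.sum_erase_add T _ ht₀
    have hterm : ∀ t ∈ T.erase t₀, (F t ∩ C.erase c₀).card ≤ (F t ∩ C).card := by
      intro t _
      exact Finset.card_le_card (Finset.inter_subset_inter le_rfl (Finset.erase_subset _ _))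
    have hsum2 : ∑ t ∈ T.erase t₀, (F t ∩ C.erase c₀).card ≤ n - 1 := by
      by_cases h0 : (F t₀ ∩ C).card = 0
      · have hz : ∀ t ∈ T.erase t₀, (F t ∩ C.erase c₀).card = 0 := by
          intro t ht
          have hm := hmax t (Finset.mem_of_mem_erase ht)
          have ht' := hterm t ht
          omega
        rw [Finset.sum_eq_zero hz]
        omega
      · calc ∑ t ∈ T.erase t₀, (F t ∩ C.erase c₀).card
            ≤ ∑ t ∈ T.erase t₀, (F t ∩ C).card := Finset.sum_le_sum hterm
          _ ≤ n - 1 := by omega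
    obtain ⟨f', hinj', hf'⟩ := ih (T.erase t₀) (C.erase c₀) F
      (by rw [Finset.card_erase_of_mem ht₀, hT]; rfl)
      (by rw [Finset.card_erase_of_mem hc₀C, hC]; rfl)
      hsum2
    refine ⟨Function.update f' t₀ c₀, ?_, ?_⟩
    · intro u hu w hw heq
      by_cases hu0 : u = t₀ <;> by_cases hw0 : w = t₀
      · rw [hu0, hw0]
      · exfalso
        rw [hu0, Function.update_self, Function.update_of_ne hw0] at heq
        have hwE : w ∈ T.erase t₀ := Finset.mem_erase.mpr ⟨hw0, hw⟩
        have hmem := (hf' w hwE).1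
        rw [← heq] at hmem
        exact (Finset.mem_erase.mp hmem).1 rfl
      · exfalso
        rw [hw0, Function.update_self, Function.update_of_ne hu0] at heq
        have huE : u ∈ T.erase t₀ := Finset.mem_erase.mpr ⟨hu0, hu⟩
        have hmem := (hf' u huE).1
        rw [heq] at hmem
        exact (Finset.mem_erase.mp hmem).1 rfl
      · rw [Function.update_of_ne hu0, Function.update_of_ne hw0] at heq
        exact hinj' (Finset.mem_coe.mpr (Finset.mem_erase.mpr ⟨hu0, hu⟩))
          (Finset.mem_coe.mpr (Finset.mem_erase.mpr ⟨hw0, hw⟩)) heq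
    · intro t ht
      by_cases h : t = t₀
      · subst h
        rw [Function.update_self]
        exact ⟨hc₀C, hc₀F⟩
      · rw [Function.update_of_ne h]
        have hmem := hf' t (Finset.mem_erase.mpr ⟨h, ht⟩)
        exact ⟨Finset.mem_of_mem_erase hmem.1, hmem.2⟩

theorem biregular_X_interval_coloring {V : Type*} [Fintype V] [DecidableEq V]
    (G : SimpleGraph V) [DecidableRel G.Adj] (X : Set V) (a b : ℕ)
    (hbip : IsBipartition G X)
    (ha : ∀ x ∈ X, G.degree x = a)
    (hb : ∀ y ∉ X, G.degree y = b) :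
    ∃ c : G.edgeSet → ℕ, IsProperEdgeColoring G c ∧ (∀ e, c e < a * b) ∧
      ∀ x ∈ X, IntervalAt G c x := by
  classical
  -- every edge has a unique endpoint in X
  have key : ∀ e : G.edgeSet, ∃ u, u ∈ (e : Sym2 V) ∧ u ∈ X ∧
      ∀ z, z ∈ (e : Sym2 V) → z ∈ X → z = u := by
    rintro ⟨e, he⟩
    induction e using Sym2.ind with
    | _ u w =>
      rw [SimpleGraph.mem_edgeSet] at he
      have hiff := hbip u w he
      by_cases hu : u ∈ X
      · refine ⟨u, Sym2.mem_mk_left u w, hu, ?_⟩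
        intro z hz hzX
        rcases Sym2.mem_iff.mp hz with rfl | rfl
        · rfl
        · exact absurd hzX (hiff.mp hu)
      · have hw : w ∈ X := by
          by_contra hw
          exact hu (hiff.mpr hw)
        refine ⟨w, Sym2.mem_mk_right u w, hw, ?_⟩
        intro z hz hzX
        rcases Sym2.mem_iff.mp hz with rfl | rfl
        · exact absurd hzX hu
        · rfl
  choose xend hmem hXe huniq using key
  set yend : G.edgeSet → V := fun e => Sym2.Mem.other (hmem e) with hyenddef
  have hedge : ∀ e : G.edgeSet, s(xend e, yend e) = (e : Sym2 V) := fun e =>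
    Sym2.other_spec (hmem e)
  have hymem : ∀ e : G.edgeSet, yend e ∈ (e : Sym2 V) := fun e => Sym2.other_mem (hmem e)
  have hadj : ∀ e : G.edgeSet, G.Adj (xend e) (yend e) := by
    intro e
    have hp := e.prop
    rw [← hedge e, SimpleGraph.mem_edgeSet] at hp
    exact hp
  have hyX : ∀ e : G.edgeSet, yend e ∉ X := by
    intro e h
    exact (hadj e).ne' (huniq e (yend e) (hymem e) h)
  have hmem_iff : ∀ (e : G.edgeSet) (z : V), z ∈ (e : Sym2 V) ↔ z = xend e ∨ z = yend e := by
    intro e z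
    rw [← hedge e, Sym2.mem_iff]
  -- number of edges at a vertex y ∉ X
  have cardB : ∀ y, y ∉ X →
      (univ.filter fun f : G.edgeSet => y ∈ (f : Sym2 V)).card = G.degree y := by
    intro y hy
    rw [← SimpleGraph.card_neighborFinset_eq_degree]
    apply Finset.card_bij (fun f _ => xend f)
    · intro f hf
      rw [SimpleGraph.mem_neighborFinset]
      have hyf : y ∈ (f : Sym2 V) := (Finset.mem_filter.mp hf).2
      have hyy : y = yend f := by
        rcases (hmem_iff f y).mp hyf with h | h
        · exact absurd (h ▸ hXe f) hy
        · exact h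
      rw [hyy]
      exact (hadj f).symm
    · intro f1 hf1 f2 hf2 heq
      have e1 : y = yend f1 := by
        rcases (hmem_iff f1 y).mp (Finset.mem_filter.mp hf1).2 with h | h
        · exact absurd (h ▸ hXe f1) hy
        · exact h
      have e2 : y = yend f2 := by
        rcases (hmem_iff f2 y).mp (Finset.mem_filter.mp hf2).2 with h | h
        · exact absurd (h ▸ hXe f2) hy
        · exact h
      apply Subtype.ext
      rw [← hedge f1, ← hedge f2, ← e1, ← e2, heq]
    · intro z hz
      rw [SimpleGraph.mem_neighborFinset] at hz
      have hzX : z ∈ X := (hbip z y hz.symm).mpr hy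
      refine ⟨⟨s(y, z), (G.mem_edgeSet).mpr hz⟩, ?_, ?_⟩
      · exact Finset.mem_filter.mpr ⟨Finset.mem_univ _, Sym2.mem_mk_left y z⟩
      · set f : G.edgeSet := ⟨s(y, z), (G.mem_edgeSet).mpr hz⟩ with hfdef
        have hzf : z ∈ (f : Sym2 V) := Sym2.mem_mk_right y z
        rcases (hmem_iff f z).mp hzf with h | h
        · exact h.symm
        · exact absurd (h ▸ hzX) (hyX f)
  -- main induction
  have main : ∀ s : Finset V, ↑s ⊆ X →
      ∃ (v : V → ℕ) (p : G.edgeSet → ℕ),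
        (∀ e, xend e ∈ s → v (xend e) < b) ∧
        (∀ e, xend e ∈ s → p e < a) ∧
        (∀ e f, xend e ∈ s → xend f ∈ s → e ≠ f → xend e = xend f → p e ≠ p f) ∧
        (∀ e f, xend e ∈ s → xend f ∈ s → xend e ≠ xend f → yend e = yend f →
          v (xend e) = v (xend f) → p e ≠ p f) := by
    intro s
    induction s using Finset.induction_on with
    | empty =>
      intro _
      exact ⟨fun _ => 0, fun _ => 0,
        fun e he => absurd he (Finset.notMem_empty _),
        fun e he => absurd he (Finset.notMem_empty _),
        fun e f he => absurd he (Finset.notMem_empty _),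
        fun e f he => absurd he (Finset.notMem_empty _)⟩
    | @insert x s hxs ih =>
      intro hsub
      have hxX : x ∈ X := hsub (Finset.mem_coe.mpr (Finset.mem_insert_self x s))
      have hssub : ↑s ⊆ X := fun z hz =>
        hsub (Finset.mem_coe.mpr (Finset.mem_insert_of_mem (Finset.mem_coe.mp hz)))
      obtain ⟨v, p, h1, h2, h3, h4⟩ := ih hssub
      have hold : ∀ e : G.edgeSet, xend e ∈ s → xend e ≠ x := fun e he h => hxs (h ▸ he)
      by_cases hapos : 0 < a
      case neg =>
        -- a = 0 : no vertex of X has an edge, nothing changes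
        have hnox : ∀ e : G.edgeSet, xend e ≠ x := by
          intro e h
          have hadjx : G.Adj x (yend e) := h ▸ hadj e
          have hyN : yend e ∈ G.neighborFinset x :=
            (SimpleGraph.mem_neighborFinset G x (yend e)).mpr hadjx
          have hpos : 0 < (G.neighborFinset x).card := Finset.card_pos.mpr ⟨_, hyN⟩
          rw [SimpleGraph.card_neighborFinset_eq_degree, ha x hxX] at hpos
          omega
        refine ⟨v, p, ?_, ?_, ?_, ?_⟩
        · intro e he
          exact h1 e ((Finset.mem_insert.mp he).resolve_left (hnox e))
        · intro e he
          exact h2 e ((Finset.mem_insert.mp he).resolve_left (hnox e))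
        · intro e f he hf
          exact h3 e f ((Finset.mem_insert.mp he).resolve_left (hnox e))
            ((Finset.mem_insert.mp hf).resolve_left (hnox f))
        · intro e f he hf
          exact h4 e f ((Finset.mem_insert.mp he).resolve_left (hnox e))
            ((Finset.mem_insert.mp hf).resolve_left (hnox f))
      case pos =>
      set N := G.neighborFinset x with hNdef
      have hNcard : N.card = a := by
        rw [hNdef, SimpleGraph.card_neighborFinset_eq_degree]; exact ha x hxX
      have hbpos : 0 < b := by
        obtain ⟨y₀, hy₀⟩ := Finset.card_pos.mp (by omega : 0 < N.card)
        have hadj0 : G.Adj x y₀ := (SimpleGraph.mem_neighborFinset G x y₀).mp hy₀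
        have hy₀X : y₀ ∉ X := (hbip x y₀ hadj0).mp hxX
        have hxN : x ∈ G.neighborFinset y₀ :=
          (SimpleGraph.mem_neighborFinset G y₀ x).mpr hadj0.symm
        have hpos : 0 < (G.neighborFinset y₀).card := Finset.card_pos.mpr ⟨_, hxN⟩
        rw [SimpleGraph.card_neighborFinset_eq_degree, hb y₀ hy₀X] at hpos
        exact hpos
      set A : V → Finset G.edgeSet :=
        fun y => univ.filter (fun f => y ∈ (f : Sym2 V) ∧ xend f ∈ s) with hAdef
      set D : V → ℕ → Finset G.edgeSet :=
        fun y w => (A y).filter (fun f => v (xend f) = w) with hDdef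
      set Fc : V → ℕ → Finset ℕ := fun y w => (D y w).image p with hFcdef
      have hAcard : ∀ y ∈ N, (A y).card ≤ b - 1 := by
        intro y hy
        have hadjxy : G.Adj x y := (SimpleGraph.mem_neighborFinset G x y).mp hy
        have hyX' : y ∉ X := (hbip x y hadjxy).mp hxX
        set e₀ : G.edgeSet := ⟨s(x, y), (G.mem_edgeSet).mpr hadjxy⟩ with he₀def
        have he₀B : e₀ ∈ univ.filter (fun f : G.edgeSet => y ∈ (f : Sym2 V)) :=
          Finset.mem_filter.mpr ⟨Finset.mem_univ _, Sym2.mem_mk_right x y⟩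
        have hxe₀ : xend e₀ = x := (huniq e₀ x (Sym2.mem_mk_left x y) hxX).symm
        have hsubA : A y ⊆ (univ.filter (fun f : G.edgeSet => y ∈ (f : Sym2 V))).erase e₀ := by
          intro f hf
          obtain ⟨-, hyf, hxf⟩ := Finset.mem_filter.mp hf
          refine Finset.mem_erase.mpr ⟨?_, Finset.mem_filter.mpr ⟨Finset.mem_univ _, hyf⟩⟩
          intro hfe
          apply hxs
          rw [← hxe₀, ← hfe]
          exact hxf
        calc (A y).card ≤ _ := Finset.card_le_card hsubA
          _ = (univ.filter (fun f : G.edgeSet => y ∈ (f : Sym2 V))).card - 1 :=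
            Finset.card_erase_of_mem he₀B
          _ = G.degree y - 1 := by rw [cardB y hyX']
          _ = b - 1 := by rw [hb y hyX']
      have hDsum : ∀ y ∈ N, ∑ w ∈ range b, (D y w).card = (A y).card := by
        intro y _
        refine (Finset.card_eq_sum_card_fiberwise ?_).symm
        intro f hf
        exact Finset.mem_range.mpr (h1 f (Finset.mem_filter.mp hf).2.2)
      have htot : ∑ w ∈ range b, ∑ y ∈ N, (Fc y w).card ≤ a * (b - 1) := by
        rw [Finset.sum_comm]
        calc ∑ y ∈ N, ∑ w ∈ range b, (Fc y w).card
            ≤ ∑ y ∈ N, ∑ w ∈ range b, (D y w).card :=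
              Finset.sum_le_sum (fun y _ => Finset.sum_le_sum (fun w _ => Finset.card_image_le))
          _ = ∑ y ∈ N, (A y).card := Finset.sum_congr rfl hDsum
          _ ≤ ∑ y ∈ N, (b - 1) := Finset.sum_le_sum hAcard
          _ = a * (b - 1) := by rw [Finset.sum_const, hNcard, smul_eq_mul]
      have hw₀ : ∃ w₀, w₀ < b ∧ ∑ y ∈ N, (Fc y w₀).card ≤ a - 1 := by
        by_contra hcon
        push_neg at hcon
        have hall : ∀ w ∈ range b, a ≤ ∑ y ∈ N, (Fc y w).card := by
          intro w hw
          have := hcon w (Finset.mem_range.mp hw)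
          omega
        have hge : b * a ≤ ∑ w ∈ range b, ∑ y ∈ N, (Fc y w).card := by
          calc b * a = ∑ _w ∈ range b, a := by rw [Finset.sum_const, card_range, smul_eq_mul]
            _ ≤ _ := Finset.sum_le_sum hall
        have hlt : a * (b - 1) < b * a := by
          calc a * (b - 1) < a * b := by
                have hb1 : b - 1 < b := Nat.sub_lt hbpos one_pos
                exact (Nat.mul_lt_mul_left hapos).mpr hb1
            _ = b * a := Nat.mul_comm a b
        exact absurd (le_trans hge htot) (not_le.mpr hlt)
      obtain ⟨w₀, hw₀b, hw₀sum⟩ := hw₀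
      have hsdrsum : ∑ y ∈ N, ((Fc y w₀) ∩ range a).card ≤ a - 1 :=
        le_trans (Finset.sum_le_sum fun y _ =>
          Finset.card_le_card Finset.inter_subset_left) hw₀sum
      obtain ⟨f, hfinj, hfP⟩ := sdr_aux a N (range a) (fun y => Fc y w₀)
        hNcard (card_range a) hsdrsum
      have hyendN : ∀ e : G.edgeSet, xend e = x → yend e ∈ N := fun e he =>
        (SimpleGraph.mem_neighborFinset G x (yend e)).mpr (he ▸ hadj e)
      refine ⟨Function.update v x w₀,
        fun e => if xend e = x then f (yend e) else p e, ?_, ?_, ?_, ?_⟩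
      · intro e he
        rcases Finset.mem_insert.mp he with h | h
        · rw [h, Function.update_self]; exact hw₀b
        · rw [Function.update_of_ne (hold e h)]; exact h1 e h
      · intro e he
        rcases Finset.mem_insert.mp he with h | h
        · simp only [if_pos h]
          exact Finset.mem_range.mp (hfP (yend e) (hyendN e h)).1
        · simp only [if_neg (hold e h)]; exact h2 e h
      · intro e f' he hf' hne hxx
        by_cases hex : xend e = x
        · have hfx : xend f' = x := hxx ▸ hex
          simp only [if_pos hex, if_pos hfx]
          have hyne : yend e ≠ yend f' := by
            intro hy
            apply hne
            apply Subtype.ext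
            rw [← hedge e, ← hedge f', hex, hfx, hy]
          intro hc
          exact hyne (hfinj (Finset.mem_coe.mpr (hyendN e hex))
            (Finset.mem_coe.mpr (hyendN f' hfx)) hc)
        · have hfx : xend f' ≠ x := fun h => hex (hxx.trans h)
          have he' : xend e ∈ s := (Finset.mem_insert.mp he).resolve_left hex
          have hf'' : xend f' ∈ s := (Finset.mem_insert.mp hf').resolve_left hfx
          simp only [if_neg hex, if_neg hfx]
          exact h3 e f' he' hf'' hne hxx
      · intro e f' he hf' hxne hyeq hveq
        by_cases hex : xend e = x <;> by_cases hfx : xend f' = x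
        · exact absurd (hex.trans hfx.symm) hxne
        · have hf's : xend f' ∈ s := (Finset.mem_insert.mp hf').resolve_left hfx
          simp only [if_pos hex, if_neg hfx]
          rw [hex, Function.update_self, Function.update_of_ne hfx] at hveq
          have hfD : f' ∈ D (yend e) w₀ := by
            refine Finset.mem_filter.mpr ⟨Finset.mem_filter.mpr
              ⟨Finset.mem_univ _, ?_, hf's⟩, hveq.symm⟩
            rw [hyeq]; exact hymem f'
          have hpf : p f' ∈ Fc (yend e) w₀ := Finset.mem_image_of_mem p hfD
          intro hc
          exact (hfP (yend e) (hyendN e hex)).2 (hc ▸ hpf)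
        · have he's : xend e ∈ s := (Finset.mem_insert.mp he).resolve_left hex
          simp only [if_neg hex, if_pos hfx]
          rw [hfx, Function.update_self, Function.update_of_ne hex] at hveq
          have heD : e ∈ D (yend f') w₀ := by
            refine Finset.mem_filter.mpr ⟨Finset.mem_filter.mpr
              ⟨Finset.mem_univ _, ?_, he's⟩, hveq⟩
            rw [← hyeq]; exact hymem e
          have hpe : p e ∈ Fc (yend f') w₀ := Finset.mem_image_of_mem p heD
          intro hc
          exact (hfP (yend f') (hyendN f' hfx)).2 (hc ▸ hpe)
        · have he's : xend e ∈ s := (Finset.mem_insert.mp he).resolve_left hex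
          have hf's : xend f' ∈ s := (Finset.mem_insert.mp hf').resolve_left hfx
          simp only [if_neg hex, if_neg hfx]
          rw [Function.update_of_ne hex, Function.update_of_ne hfx] at hveq
          exact h4 e f' he's hf's hxne hyeq hveq
  -- instantiate at all of X
  obtain ⟨v, p, h1, h2, h3, h4⟩ := main (Set.toFinite X).toFinset
    (fun z hz => (Set.Finite.mem_toFinset _).mp (Finset.mem_coe.mp hz))
  have hsX : ∀ e : G.edgeSet, xend e ∈ (Set.toFinite X).toFinset := fun e =>
    (Set.Finite.mem_toFinset _).mpr (hXe e)
  refine ⟨fun e => a * v (xend e) + p e, ?_, ?_, ?_⟩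
  · -- proper
    intro e f' hne hshare
    obtain ⟨u, hue, huf⟩ := hshare
    by_cases hxx : xend e = xend f'
    · have hpne := h3 e f' (hsX e) (hsX f') hne hxx
      intro hc
      simp only [hxx] at hc
      exact hpne (Nat.add_left_cancel hc)
    · have hyy : yend e = yend f' := by
        rcases (hmem_iff e u).mp hue with h | h <;> rcases (hmem_iff f' u).mp huf with h' | h'
        · exact absurd (h ▸ h') hxx
        · exfalso
          exact hyX f' (h' ▸ h ▸ hXe e)
        · exfalso
          exact hyX e (h ▸ h' ▸ hXe f')
        · exact h.symm.trans h'
      intro hc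
      simp only at hc
      have hpa := h2 e (hsX e)
      have hpb := h2 f' (hsX f')
      have ha0 : 0 < a := lt_of_le_of_lt (Nat.zero_le _) hpa
      have hv : v (xend e) = v (xend f') := by
        have hq1 : (a * v (xend e) + p e) / a = v (xend e) := by
          rw [Nat.mul_add_div ha0, Nat.div_eq_of_lt hpa, add_zero]
        have hq2 : (a * v (xend f') + p f') / a = v (xend f') := by
          rw [Nat.mul_add_div ha0, Nat.div_eq_of_lt hpb, add_zero]
        rw [← hq1, ← hq2, hc]
      have hp : p e = p f' := by
        rw [hv] at hc
        exact Nat.add_left_cancel hc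
      exact h4 e f' (hsX e) (hsX f') hxx hyy hv hp
  · -- bound
    intro e
    have hpa := h2 e (hsX e)
    have hv := h1 e (hsX e)
    calc a * v (xend e) + p e < a * v (xend e) + a := by omega
      _ = a * (v (xend e) + 1) := by ring
      _ ≤ a * b := Nat.mul_le_mul_left a hv
  · -- interval at x
    intro x hxX
    have hxend_x : ∀ e : G.edgeSet, x ∈ (e : Sym2 V) → xend e = x := fun e he =>
      (huniq e x he hxX).symm
    have hdegx : (G.neighborFinset x).card = a := by
      rw [SimpleGraph.card_neighborFinset_eq_degree]; exact ha x hxX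
    set c : G.edgeSet → ℕ := fun e => a * v (xend e) + p e with hcdef
    have hpal_sub : ∀ n, n ∈ palette G c x → a * v x ≤ n ∧ n < a * v x + a := by
      rintro n ⟨e, hxe, rfl⟩
      have hx := hxend_x e hxe
      have hpa := h2 e (hsX e)
      constructor
      · simp only [hcdef, hx]
        omega
      · simp only [hcdef, hx]
        omega
    set g : V → ℕ := fun y => if h : G.Adj x y then p ⟨s(x, y), (G.mem_edgeSet).mpr h⟩ else 0
      with hgdef
    have hginj : Set.InjOn g ↑(G.neighborFinset x) := by
      intro y1 hy1 y2 hy2 heq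
      have adj1 : G.Adj x y1 := (SimpleGraph.mem_neighborFinset G x y1).mp
        (Finset.mem_coe.mp hy1)
      have adj2 : G.Adj x y2 := (SimpleGraph.mem_neighborFinset G x y2).mp
        (Finset.mem_coe.mp hy2)
      set e1 : G.edgeSet := ⟨s(x, y1), (G.mem_edgeSet).mpr adj1⟩ with he1def
      set e2 : G.edgeSet := ⟨s(x, y2), (G.mem_edgeSet).mpr adj2⟩ with he2def
      rw [hgdef] at heq
      simp only [dif_pos adj1, dif_pos adj2] at heq
      by_contra hne
      have hene : e1 ≠ e2 := by
        intro hcontra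
        apply hne
        have := Subtype.ext_iff.mp hcontra
        rw [he1def, he2def] at this
        simp only at this
        exact Sym2.congr_right.mp this
      have hx1 : xend e1 = x := hxend_x e1 (Sym2.mem_mk_left x y1)
      have hx2 : xend e2 = x := hxend_x e2 (Sym2.mem_mk_left x y2)
      exact h3 e1 e2 (hsX e1) (hsX e2) hene (hx1.trans hx2.symm) heq
    have himg : (G.neighborFinset x).image g = range a := by
      apply Finset.eq_of_subset_of_card_le
      · intro n hn
        obtain ⟨y, hy, rfl⟩ := Finset.mem_image.mp hn
        have adj : G.Adj x y := (SimpleGraph.mem_neighborFinset G x y).mp hy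
        rw [hgdef]
        simp only [dif_pos adj]
        exact Finset.mem_range.mpr (h2 _ (hsX _))
      · rw [card_range, Finset.card_image_of_injOn hginj, hdegx]
    have hsurj : ∀ k, k < a → ∃ e : G.edgeSet, x ∈ (e : Sym2 V) ∧ p e = k := by
      intro k hk
      have : k ∈ (G.neighborFinset x).image g := himg ▸ Finset.mem_range.mpr hk
      obtain ⟨y, hy, hgy⟩ := Finset.mem_image.mp this
      have adj : G.Adj x y := (SimpleGraph.mem_neighborFinset G x y).mp hy
      refine ⟨⟨s(x, y), (G.mem_edgeSet).mpr adj⟩, Sym2.mem_mk_left x y, ?_⟩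
      rw [hgdef] at hgy
      simpa only [dif_pos adj] using hgy
    intro c1 c2 m hc1 hc2 h1m h2m
    obtain ⟨hL1, _⟩ := hpal_sub c1 hc1
    obtain ⟨_, hU2⟩ := hpal_sub c2 hc2
    have hmL : a * v x ≤ m := le_trans hL1 h1m
    have hmU : m < a * v x + a := lt_of_le_of_lt h2m hU2
    obtain ⟨e, hxe, hpe⟩ := hsurj (m - a * v x) (by omega)
    refine ⟨e, hxe, ?_⟩
    have hx := hxend_x e hxe
    simp only [hcdef, hx]
    omega
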